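/- Let P and Q : ℝ → ℝ be two continuous functions such that for every ε > 0 there exists M > 0 with |P(s)| ≤ ε|Q(s)| whenever |s| ≥ M. Let {v_j}_j, v and w be Lebesgue-measurable functions from ℝ^N to ℝ, with w bounded, such that sup_j ∫_{ℝ^N} |Q(v_j(x)) w(x)| dx < +∞ and P(v_j(x)) → v(x) for almost every x ∈ ℝ^N. Then for every bounded Borel set B ⊆ ℝ^N one has ∫_B |(P(v_j(x)) − v(x)) w(x)| dx → 0 as j → ∞. -/

import Mathlib

open Filter Set MeasureTheory Topology

/-- Strauss-type compactness lemma, local version. -/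
theorem stmt6 (N : ℕ) (hN : 1 ≤ N) (P Q : ℝ → ℝ)
    (hP : Continuous P) (hQ : Continuous Q)
    (hPQ : ∀ ε > (0 : ℝ), ∃ M > (0 : ℝ), ∀ s : ℝ, M ≤ |s| → |P s| ≤ ε * |Q s|)
    (v : ℕ → EuclideanSpace ℝ (Fin N) → ℝ) (vlim w : EuclideanSpace ℝ (Fin N) → ℝ)
    (hv : ∀ j, Measurable (v j)) (hvlim : Measurable vlim) (hw : Measurable w)
    (hwb : ∃ Cw : ℝ, ∀ x, |w x| ≤ Cw)
    (hsup : ∃ C : ENNReal, C ≠ ⊤ ∧ ∀ j,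
      (∫⁻ x, ENNReal.ofReal |Q (v j x) * w x| ∂volume) ≤ C)
    (hae : ∀ᵐ x ∂(volume : Measure (EuclideanSpace ℝ (Fin N))),
      Filter.Tendsto (fun j => P (v j x)) Filter.atTop (nhds (vlim x))) :
    ∀ B : Set (EuclideanSpace ℝ (Fin N)), MeasurableSet B → Bornology.IsBounded B →
      Filter.Tendsto
        (fun j => ∫⁻ x in B, ENNReal.ofReal |(P (v j x) - vlim x) * w x| ∂volume)
        Filter.atTop (nhds 0) := by
  intro B hB hBb
  obtain ⟨Cw, hwC⟩ := hwb
  have hCw0 : 0 ≤ Cw := le_trans (abs_nonneg _) (hwC 0)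
  obtain ⟨C, hCtop, hC⟩ := hsup
  have hvolB : volume B < ⊤ := hBb.measure_lt_top
  have measQ : ∀ j, Measurable fun x => ENNReal.ofReal |Q (v j x) * w x| :=
    fun j => (((hQ.measurable.comp (hv j)).mul hw).abs).ennreal_ofReal
  have measP : ∀ j, Measurable fun x => ENNReal.ofReal |P (v j x) * w x| :=
    fun j => (((hP.measurable.comp (hv j)).mul hw).abs).ennreal_ofReal
  have measF : ∀ j, Measurable fun x =>
      ENNReal.ofReal |(P (v j x) - vlim x) * w x| :=
    fun j => ((((hP.measurable.comp (hv j)).sub hvlim).mul hw).abs).ennreal_ofReal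
  have key : ∀ ε : ℝ, 0 < ε → ∀ δ : ENNReal, 0 < δ →
      ∀ᶠ j in atTop, (∫⁻ x in B, ENNReal.ofReal |(P (v j x) - vlim x) * w x| ∂volume)
        ≤ ENNReal.ofReal ε * C + δ := by
    intro ε hε δ hδ
    obtain ⟨M, hM, hPM⟩ := hPQ ε hε
    obtain ⟨C₁, hC₁⟩ :=
      (isCompact_Icc : IsCompact (Icc (-M) M)).exists_bound_of_continuousOn
        hP.continuousOn
    have hC₁0 : 0 ≤ C₁ :=
      le_trans (norm_nonneg _) (hC₁ 0 ⟨by linarith, by linarith⟩)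
    have hPbound : ∀ s, |P s| ≤ C₁ + ε * |Q s| := by
      intro s
      rcases le_or_gt |s| M with h | h
      · have h1 := hC₁ s (abs_le.mp h)
        rw [Real.norm_eq_abs] at h1
        nlinarith [abs_nonneg (Q s), hε.le]
      · have := hPM s h.le
        nlinarith [abs_nonneg (Q s)]
    -- uniform bound on ∫_B |P(v j) w|
    have hPj : ∀ j, (∫⁻ x in B, ENNReal.ofReal |P (v j x) * w x| ∂volume) ≤
        ENNReal.ofReal (C₁ * Cw) * volume B + ENNReal.ofReal ε * C := by
      intro j
      have hpt : ∀ x, ENNReal.ofReal |P (v j x) * w x| ≤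
          ENNReal.ofReal (C₁ * Cw) + ENNReal.ofReal ε * ENNReal.ofReal |Q (v j x) * w x| := by
        intro x
        rw [← ENNReal.ofReal_mul hε.le,
          ← ENNReal.ofReal_add (by positivity) (by positivity)]
        apply ENNReal.ofReal_le_ofReal
        have h1 := hPbound (v j x)
        have h2 := hwC x
        have h3 := abs_mul (P (v j x)) (w x)
        have h4 := abs_mul (Q (v j x)) (w x)
        nlinarith [abs_nonneg (w x), abs_nonneg (Q (v j x)), abs_nonneg (P (v j x))]
      calc (∫⁻ x in B, ENNReal.ofReal |P (v j x) * w x| ∂volume)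
          ≤ ∫⁻ x in B, (ENNReal.ofReal (C₁ * Cw)
              + ENNReal.ofReal ε * ENNReal.ofReal |Q (v j x) * w x|) ∂volume :=
            lintegral_mono hpt
        _ = ENNReal.ofReal (C₁ * Cw) * volume B
              + ENNReal.ofReal ε * ∫⁻ x in B, ENNReal.ofReal |Q (v j x) * w x| ∂volume := by
            rw [lintegral_add_left measurable_const, lintegral_const,
              lintegral_const_mul _ (measQ j)]
            simp
        _ ≤ ENNReal.ofReal (C₁ * Cw) * volume B + ENNReal.ofReal ε * C := by
            gcongr
            exact le_trans (setLIntegral_le_lintegral _ _) (hC j)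
    set K := ENNReal.ofReal (C₁ * Cw) * volume B + ENNReal.ofReal ε * C with hK
    have hKtop : K ≠ ⊤ := by
      apply ENNReal.add_ne_top.mpr
      constructor
      · exact ENNReal.mul_ne_top ENNReal.ofReal_ne_top hvolB.ne
      · exact ENNReal.mul_ne_top ENNReal.ofReal_ne_top hCtop
    have hvw : (∫⁻ x in B, ENNReal.ofReal |vlim x * w x| ∂volume) ≤ K := by
      have hcong : ∀ᵐ x ∂(volume.restrict B), ENNReal.ofReal |vlim x * w x|
          = Filter.liminf (fun j => ENNReal.ofReal |P (v j x) * w x|) atTop := by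
        filter_upwards [ae_restrict_of_ae hae] with x hx
        have : Tendsto (fun j => ENNReal.ofReal |P (v j x) * w x|) atTop
            (𝓝 (ENNReal.ofReal |vlim x * w x|)) := by
          exact (ENNReal.continuous_ofReal.tendsto _).comp
            ((hx.mul tendsto_const_nhds).abs)
        exact this.liminf_eq.symm
      rw [lintegral_congr_ae hcong]
      refine le_trans (lintegral_liminf_le fun j => measP j) ?_
      refine le_trans (Filter.liminf_le_liminf (Filter.Eventually.of_forall hPj)) ?_
      simp [Filter.liminf_const]
    set G := fun x => ENNReal.ofReal ((C₁ + |vlim x|) * |w x|) with hGdef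
    have hGmeas : Measurable G :=
      (((measurable_const.add hvlim.abs)).mul hw.abs).ennreal_ofReal
    have hGtop : (∫⁻ x in B, G x ∂volume) ≠ ⊤ := by
      have hpt : ∀ x, G x ≤ ENNReal.ofReal (C₁ * Cw) + ENNReal.ofReal |vlim x * w x| := by
        intro x
        rw [← ENNReal.ofReal_add (by positivity) (by positivity)]
        apply ENNReal.ofReal_le_ofReal
        have h2 := hwC x
        have h4 := abs_mul (vlim x) (w x)
        nlinarith [abs_nonneg (w x), abs_nonneg (vlim x)]
      have hle : (∫⁻ x in B, G x ∂volume) ≤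
          ENNReal.ofReal (C₁ * Cw) * volume B + K := by
        calc (∫⁻ x in B, G x ∂volume)
            ≤ ∫⁻ x in B, (ENNReal.ofReal (C₁ * Cw)
                + ENNReal.ofReal |vlim x * w x|) ∂volume := lintegral_mono hpt
          _ = ENNReal.ofReal (C₁ * Cw) * volume B
                + ∫⁻ x in B, ENNReal.ofReal |vlim x * w x| ∂volume := by
              rw [lintegral_add_left measurable_const, lintegral_const]
              simp
          _ ≤ ENNReal.ofReal (C₁ * Cw) * volume B + K := by gcongr
      exact ne_top_of_le_ne_top (by
        exact ENNReal.add_ne_top.mpr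
          ⟨ENNReal.mul_ne_top ENNReal.ofReal_ne_top hvolB.ne, hKtop⟩) hle
    -- DCT for min with G
    have hdct : Tendsto (fun j => ∫⁻ x in B,
        min (ENNReal.ofReal |(P (v j x) - vlim x) * w x|) (G x) ∂volume) atTop (𝓝 0) := by
      have h0 : (0 : ENNReal) = ∫⁻ _ in B, (0 : ENNReal) ∂volume := by simp
      rw [h0]
      apply tendsto_lintegral_of_dominated_convergence G
        (fun j => (measF j).min hGmeas)
        (fun j => Filter.Eventually.of_forall fun x => min_le_right _ _) hGtop
      filter_upwards [ae_restrict_of_ae hae] with x hx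
      have hF0 : Tendsto (fun j => ENNReal.ofReal |(P (v j x) - vlim x) * w x|) atTop
          (𝓝 0) := by
        have h1 : Tendsto (fun j => |(P (v j x) - vlim x) * w x|) atTop
            (𝓝 |(vlim x - vlim x) * w x|) :=
          (((hx.sub tendsto_const_nhds).mul tendsto_const_nhds).abs)
        have h2 := (ENNReal.continuous_ofReal.tendsto _).comp h1
        simpa [Function.comp_def] using h2
      exact tendsto_of_tendsto_of_tendsto_of_le_of_le tendsto_const_nhds hF0
        (fun j => zero_le) (fun j => min_le_left _ _)
    -- pointwise key inequality
    have hptkey : ∀ j x, ENNReal.ofReal |(P (v j x) - vlim x) * w x| ≤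
        min (ENNReal.ofReal |(P (v j x) - vlim x) * w x|) (G x)
          + ENNReal.ofReal ε * ENNReal.ofReal |Q (v j x) * w x| := by
      intro j x
      by_cases hcase : |(P (v j x) - vlim x) * w x| ≤ (C₁ + |vlim x|) * |w x|
      · rw [min_eq_left (ENNReal.ofReal_le_ofReal hcase)]
        exact le_self_add
      · push_neg at hcase
        have habsw : 0 < |w x| := by
          by_contra h
          push_neg at h
          have : |w x| = 0 := le_antisymm h (abs_nonneg _)
          rw [abs_mul, this] at hcase
          nlinarith [abs_nonneg (vlim x)]
        have hPa : C₁ < |P (v j x)| := by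
          by_contra h
          push_neg at h
          have h1 : |(P (v j x) - vlim x) * w x| ≤ (C₁ + |vlim x|) * |w x| := by
            rw [abs_mul]
            have : |P (v j x) - vlim x| ≤ C₁ + |vlim x| :=
              le_trans (abs_sub _ _) (by gcongr)
            exact mul_le_mul_of_nonneg_right this (abs_nonneg _)
          linarith
        have hMa : M ≤ |v j x| := by
          by_contra h
          push_neg at h
          have := hC₁ (v j x) (abs_le.mp h.le)
          rw [Real.norm_eq_abs] at this
          linarith
        have hPε := hPM (v j x) hMa
        have hreal : |(P (v j x) - vlim x) * w x| ≤
            (C₁ + |vlim x|) * |w x| + ε * |Q (v j x) * w x| := by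
          have h1 : |P (v j x) - vlim x| ≤ |P (v j x)| + |vlim x| := abs_sub _ _
          have h4 := abs_mul (Q (v j x)) (w x)
          rw [abs_mul]
          nlinarith [abs_nonneg (w x), abs_nonneg (Q (v j x)), abs_nonneg (vlim x)]
        rcases min_cases (ENNReal.ofReal |(P (v j x) - vlim x) * w x|) (G x) with
          ⟨hm, _⟩ | ⟨hm, _⟩
        · rw [hm]; exact le_self_add
        · rw [hm, hGdef]
          calc ENNReal.ofReal |(P (v j x) - vlim x) * w x|
              ≤ ENNReal.ofReal ((C₁ + |vlim x|) * |w x| + ε * |Q (v j x) * w x|) :=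
                ENNReal.ofReal_le_ofReal hreal
            _ ≤ ENNReal.ofReal ((C₁ + |vlim x|) * |w x|)
                  + ENNReal.ofReal (ε * |Q (v j x) * w x|) := ENNReal.ofReal_add_le
            _ = ENNReal.ofReal ((C₁ + |vlim x|) * |w x|)
                  + ENNReal.ofReal ε * ENNReal.ofReal |Q (v j x) * w x| := by
                rw [ENNReal.ofReal_mul hε.le]
    -- integrate
    have hint : ∀ j, (∫⁻ x in B, ENNReal.ofReal |(P (v j x) - vlim x) * w x| ∂volume) ≤
        (∫⁻ x in B, min (ENNReal.ofReal |(P (v j x) - vlim x) * w x|) (G x) ∂volume)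
          + ENNReal.ofReal ε * C := by
      intro j
      calc (∫⁻ x in B, ENNReal.ofReal |(P (v j x) - vlim x) * w x| ∂volume)
          ≤ ∫⁻ x in B, (min (ENNReal.ofReal |(P (v j x) - vlim x) * w x|) (G x)
              + ENNReal.ofReal ε * ENNReal.ofReal |Q (v j x) * w x|) ∂volume :=
            lintegral_mono (hptkey j)
        _ = (∫⁻ x in B, min (ENNReal.ofReal |(P (v j x) - vlim x) * w x|) (G x) ∂volume)
              + ENNReal.ofReal ε * ∫⁻ x in B, ENNReal.ofReal |Q (v j x) * w x| ∂volume := by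
            rw [lintegral_add_left ((measF j).min hGmeas),
              lintegral_const_mul _ (measQ j)]
        _ ≤ _ := by
            gcongr
            exact le_trans (setLIntegral_le_lintegral _ _) (hC j)
    have hev := (ENNReal.tendsto_nhds_zero.mp hdct) δ hδ
    filter_upwards [hev] with j hj
    calc (∫⁻ x in B, ENNReal.ofReal |(P (v j x) - vlim x) * w x| ∂volume)
        ≤ (∫⁻ x in B, min (ENNReal.ofReal |(P (v j x) - vlim x) * w x|) (G x) ∂volume)
            + ENNReal.ofReal ε * C := hint j
      _ ≤ δ + ENNReal.ofReal ε * C := by gcongr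
      _ = ENNReal.ofReal ε * C + δ := add_comm _ _
  -- conclude
  rw [ENNReal.tendsto_nhds_zero]
  intro E hE
  by_cases hEtop : E = ⊤
  · filter_upwards with j
    simp [hEtop]
  by_cases hC0 : C = 0
  · filter_upwards [key 1 one_pos E hE] with j hj
    simpa [hC0] using hj
  · have hE2 : (0 : ENNReal) < E / 2 := ENNReal.half_pos hE.ne'
    set ε := ((E / 2) / C).toReal with hεdef
    have hne0 : (E / 2) / C ≠ 0 := by
      intro h
      rcases ENNReal.div_eq_zero_iff.mp h with h | h
      · exact hE2.ne' h
      · exact hCtop h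
    have hnetop : (E / 2) / C ≠ ⊤ := by
      have h1 : E / 2 ≠ ⊤ := by
        simp [ENNReal.div_eq_top, hEtop]
      exact (ENNReal.div_lt_top h1 hC0).ne
    have hεpos : 0 < ε := ENNReal.toReal_pos hne0 hnetop
    have hmul : ENNReal.ofReal ε * C ≤ E / 2 := by
      rw [hεdef, ENNReal.ofReal_toReal hnetop, ENNReal.div_mul_cancel hC0 hCtop]
    filter_upwards [key ε hεpos (E / 2) hE2] with j hj
    calc (∫⁻ x in B, ENNReal.ofReal |(P (v j x) - vlim x) * w x| ∂volume)
        ≤ ENNReal.ofReal ε * C + E / 2 := hj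
      _ ≤ E / 2 + E / 2 := by gcongr
      _ = E := ENNReal.add_halves E
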